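/- The class of languages accepted by quasi-deterministic stateless (qDN) sensing 5'→3' WK automata is properly included in the class of languages accepted by quasi-deterministic sensing 5'→3' WK automata; in particular, the language b*ab* + b* = { bⁱabʲ : i,j ≥ 0 } ∪ { bⁱ : i ≥ 0 } is accepted by a quasi-deterministic sensing 5'→3' WK automaton but by no stateless sensing 5'→3' WK automaton. -/

import Mathlib

open Computability

/-- The two-letter alphabet `{a, b}`. -/
inductive Letter : Type
  | a : Letter
  | b : Letter
deriving DecidableEq

instance instFintypeLetter : Fintype Letter :=
  ⟨{Letter.a, Letter.b}, fun x => by cases x <;> simp⟩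

open Letter

/-- A sensing 5'→3' Watson-Crick automaton over the alphabet `T` with state set `Q`:
an initial state `q0`, a set `F` of final states, and a transition mapping
`δ : Q × T* × T* → 2^Q` that is nonempty for only finitely many triples. -/
structure WKAutomaton (T : Type) (Q : Type) where
  q0 : Q
  F : Set Q
  δ : Q → List T → List T → Set Q
  finite_delta : {t : Q × List T × List T | (δ t.1 t.2.1 t.2.2).Nonempty}.Finite

namespace WKAutomaton

variable {T Q : Type}

/-- One computation step on configurations:
`(q, x ++ w' ++ y) ⇒ (q', w')` iff `q' ∈ δ q x y`. -/
def Step (A : WKAutomaton T Q) (c c' : Q × List T) : Prop :=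
  ∃ x y : List T, c.2 = x ++ c'.2 ++ y ∧ c'.1 ∈ A.δ c.1 x y

/-- The accepted language: words `w` with `(q₀, w) ⇒* (q_F, λ)` for some final `q_F`. -/
def Lang (A : WKAutomaton T Q) : Set (List T) :=
  {w | ∃ qf ∈ A.F, Relation.ReflTransGen A.Step (A.q0, w) (qf, [])}

/-- `A` is deterministic: in every configuration at most one computation step
(choice of `x`, `y`, `w'`, `q'`) is applicable. -/
def Deterministic (A : WKAutomaton T Q) : Prop :=
  ∀ (q : Q) (w x₁ y₁ w₁ x₂ y₂ w₂ : List T) (q₁ q₂ : Q),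
    w = x₁ ++ w₁ ++ y₁ → q₁ ∈ A.δ q x₁ y₁ →
    w = x₂ ++ w₂ ++ y₂ → q₂ ∈ A.δ q x₂ y₂ →
    x₁ = x₂ ∧ y₁ = y₂ ∧ w₁ = w₂ ∧ q₁ = q₂

/-- `A` is quasi-deterministic: for every configuration `(q,w)`, whenever
`(q,w) ⇒ (p,u)` and `(q,w) ⇒ (r,v)`, it holds that `p = r`. -/
def QuasiDet (A : WKAutomaton T Q) : Prop :=
  ∀ (q : Q) (w : List T) (p r : Q) (u v : List T),
    A.Step (q, w) (p, u) → A.Step (q, w) (r, v) → p = r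

/-- `A` is state-deterministic: for every state `q` there is at most one state `p`
with `p ∈ δ(q,u,v)` for some words `u`, `v`. -/
def StateDet (A : WKAutomaton T Q) : Prop :=
  ∀ (q p₁ p₂ : Q) (u₁ v₁ u₂ v₂ : List T),
    p₁ ∈ A.δ q u₁ v₁ → p₂ ∈ A.δ q u₂ v₂ → p₁ = p₂

/-- `A` is stateless: `Q = F = {q₀}`. -/
def Stateless (A : WKAutomaton T Q) : Prop :=
  (∀ q : Q, q = A.q0) ∧ A.F = {A.q0}

/-- `A` is all-final: `Q = F`. -/
def AllFinal (A : WKAutomaton T Q) : Prop := A.F = Set.univ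

/-- `A` is simple: at most one head reads in each step. -/
def Simple (A : WKAutomaton T Q) : Prop :=
  ∀ (q : Q) (u v : List T), (A.δ q u v).Nonempty → u = [] ∨ v = []

/-- `A` is 1-limited: exactly one letter is read in each step. -/
def OneLimited (A : WKAutomaton T Q) : Prop :=
  ∀ (q : Q) (u v : List T), (A.δ q u v).Nonempty →
    (u = [] ∧ v.length = 1) ∨ (u.length = 1 ∧ v = [])

end WKAutomaton

/-- Equality of languages modulo the empty word. -/
def EqModLambda {T : Type} (L₁ L₂ : Set (List T)) : Prop :=
  ∀ w : List T, w ≠ [] → (w ∈ L₁ ↔ w ∈ L₂)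

/-- `L` is accepted (modulo the empty word) by some sensing 5'→3' WK automaton
with a finite state set satisfying the property `P`. -/
def AcceptsWith (T : Type) (P : ∀ Q : Type, WKAutomaton T Q → Prop)
    (L : Set (List T)) : Prop :=
  ∃ (Q : Type) (_ : Finite Q) (A : WKAutomaton T Q), P Q A ∧ EqModLambda A.Lang L

/-- The language `b*ab* + b*`. -/
def Lbabb : Set (List Letter) :=
  {w | (∃ i j : ℕ, w = List.replicate i b ++ a :: List.replicate j b) ∨
       (∃ i : ℕ, w = List.replicate i b)}

/-! ### Auxiliary material -/

/-- Transition function of the witness automaton: two states (`false` = initial,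
`true` = "after reading `a`"). -/
def dBA : Bool → List Letter → List Letter → Set Bool := fun q x y =>
  if q = false ∧ x = [a] ∧ y = [] then {true}
  else if q = false ∧ x = [b] ∧ y = [] then {false}
  else if q = true ∧ x = [b] ∧ y = [] then {true}
  else ∅

lemma mem_dBA {q p : Bool} {x y : List Letter} (h : p ∈ dBA q x y) :
    (q = false ∧ x = [a] ∧ y = [] ∧ p = true) ∨
    (q = false ∧ x = [b] ∧ y = [] ∧ p = false) ∨
    (q = true ∧ x = [b] ∧ y = [] ∧ p = true) := by
  unfold dBA at h
  split_ifs at h with h1 h2 h3 <;> simp_all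

/-- The witness quasi-deterministic automaton accepting `b*ab* + b*`. -/
def ABA : WKAutomaton Letter Bool where
  q0 := false
  F := Set.univ
  δ := dBA
  finite_delta := by
    have hfin : ({(false, ([a], [])), (false, ([b], [])), (true, ([b], []))} :
        Set (Bool × List Letter × List Letter)).Finite :=
      ((Set.finite_singleton _).insert _).insert _
    refine hfin.subset ?_
    rintro ⟨q, x, y⟩ ⟨p, hp⟩
    rcases mem_dBA hp with ⟨h1, h2, h3, _⟩ | ⟨h1, h2, h3, _⟩ | ⟨h1, h2, h3, _⟩ <;>
      subst h1 <;> subst h2 <;> subst h3 <;> simp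

lemma ABA_stepA {w : List Letter} : ABA.Step (false, a :: w) (true, w) :=
  ⟨[a], [], by simp, by simp [ABA, dBA]⟩

lemma ABA_stepB0 {w : List Letter} : ABA.Step (false, b :: w) (false, w) :=
  ⟨[b], [], by simp, by simp [ABA, dBA]⟩

lemma ABA_stepB1 {w : List Letter} : ABA.Step (true, b :: w) (true, w) :=
  ⟨[b], [], by simp, by simp [ABA, dBA]⟩

lemma ABA_runB0 (i : ℕ) (w : List Letter) :
    Relation.ReflTransGen ABA.Step (false, List.replicate i b ++ w) (false, w) := by
  induction i with
  | zero => simpa using Relation.ReflTransGen.refl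
  | succ n ih =>
      rw [List.replicate_succ, List.cons_append]
      exact Relation.ReflTransGen.head ABA_stepB0 ih

lemma ABA_runB1 (j : ℕ) :
    Relation.ReflTransGen ABA.Step (true, List.replicate j b) (true, []) := by
  induction j with
  | zero => exact Relation.ReflTransGen.refl
  | succ n ih =>
      rw [List.replicate_succ]
      exact Relation.ReflTransGen.head ABA_stepB1 ih

lemma ABA_sound {c : Bool × List Letter} {qf : Bool}
    (h : Relation.ReflTransGen ABA.Step c (qf, [])) :
    (c.1 = true → ∃ k, c.2 = List.replicate k b) ∧ (c.1 = false → c.2 ∈ Lbabb) := by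
  induction h using Relation.ReflTransGen.head_induction_on with
  | refl => exact ⟨fun _ => ⟨0, rfl⟩, fun _ => Or.inr ⟨0, rfl⟩⟩
  | head hstep _ ih =>
      obtain ⟨x, y, hw, hmem⟩ := hstep
      rcases mem_dBA hmem with ⟨h1, h2, h3, h4⟩ | ⟨h1, h2, h3, h4⟩ | ⟨h1, h2, h3, h4⟩
      · refine ⟨fun ht => by rw [h1] at ht; exact absurd ht (by simp), fun _ => ?_⟩
        obtain ⟨k, hk⟩ := ih.1 h4
        rw [hw, h2, h3, hk]
        exact Or.inl ⟨0, k, by simp⟩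
      · refine ⟨fun ht => by rw [h1] at ht; exact absurd ht (by simp), fun _ => ?_⟩
        have hu := ih.2 h4
        rw [hw, h2, h3]
        rcases hu with ⟨i, j, hij⟩ | ⟨i, hi⟩
        · exact Or.inl ⟨i + 1, j, by rw [hij]; simp [List.replicate_succ]⟩
        · exact Or.inr ⟨i + 1, by rw [hi]; simp [List.replicate_succ]⟩
      · refine ⟨fun _ => ?_, fun hf => by rw [h1] at hf; exact absurd hf (by simp)⟩
        obtain ⟨k, hk⟩ := ih.1 h4
        exact ⟨k + 1, by rw [hw, h2, h3, hk]; simp [List.replicate_succ]⟩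

lemma ABA_quasiDet : ABA.QuasiDet := by
  rintro q w p r u v ⟨x₁, y₁, hw₁, hm₁⟩ ⟨x₂, y₂, hw₂, hm₂⟩
  simp only at hw₁ hw₂
  rcases mem_dBA hm₁ with ⟨a1, a2, a3, a4⟩ | ⟨a1, a2, a3, a4⟩ | ⟨a1, a2, a3, a4⟩ <;>
    rcases mem_dBA hm₂ with ⟨c1, c2, c3, c4⟩ | ⟨c1, c2, c3, c4⟩ | ⟨c1, c2, c3, c4⟩ <;>
      first
        | exact a4.trans c4.symm
        | (rw [a1] at c1; exact absurd c1 Bool.false_ne_true)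
        | (rw [a1] at c1; exact absurd c1.symm Bool.false_ne_true)
        | (exfalso; rw [a2, a3] at hw₁; rw [c2, c3] at hw₂; rw [hw₁] at hw₂;
           simp only [List.append_nil, List.cons_append, List.nil_append,
             List.cons.injEq] at hw₂;
           exact absurd hw₂.1 (by decide))

lemma count_a_Lbabb {w : List Letter} (h : w ∈ Lbabb) : w.count a ≤ 1 := by
  rcases h with ⟨i, j, hw⟩ | ⟨i, hw⟩ <;> subst hw <;>
    simp [List.count_append, List.count_replicate, List.count_cons]

/-- The class of languages accepted by quasi-deterministic stateless (qDN) sensing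
5'→3' WK automata is properly included in the class of languages accepted by
quasi-deterministic sensing 5'→3' WK automata; in particular `b*ab* + b*` is
accepted by a quasi-deterministic sensing 5'→3' WK automaton but by no
stateless sensing 5'→3' WK automaton. -/
theorem qDN_proper_subset_qD :
    (∀ (T : Type) (L : Set (List T)),
      AcceptsWith T (fun _ A => A.QuasiDet ∧ A.Stateless) L →
      AcceptsWith T (fun _ A => A.QuasiDet) L) ∧
    AcceptsWith Letter (fun _ A => A.QuasiDet) Lbabb ∧
    ¬ AcceptsWith Letter (fun _ A => A.Stateless) Lbabb := by
  refine ⟨?_, ?_, ?_⟩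
  · rintro T L ⟨Q, fQ, A, ⟨hqd, _⟩, hL⟩
    exact ⟨Q, fQ, A, hqd, hL⟩
  · refine ⟨Bool, inferInstance, ABA, ABA_quasiDet, ?_⟩
    intro w _
    constructor
    · rintro ⟨qf, _, hchain⟩
      exact ABA_sound hchain |>.2 rfl
    · rintro (⟨i, j, hw⟩ | ⟨i, hw⟩)
      · refine ⟨true, Set.mem_univ _, ?_⟩
        subst hw
        refine Relation.ReflTransGen.trans (ABA_runB0 i _) ?_
        exact Relation.ReflTransGen.head ABA_stepA (ABA_runB1 j)
      · refine ⟨false, Set.mem_univ _, ?_⟩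
        subst hw
        simpa [ABA] using ABA_runB0 i []
  · rintro ⟨Q, fQ, A, ⟨hall, hF⟩, hL⟩
    -- `[a]` is accepted
    have ha : [a] ∈ A.Lang := (hL [a] (by simp)).mpr (Or.inl ⟨0, 0, rfl⟩)
    obtain ⟨qf, hqfF, hchain⟩ := ha
    -- extract a transition consuming exactly `a`
    have key : ∀ c : Q × List Letter,
        Relation.ReflTransGen A.Step c (qf, []) → c.2 = [a] →
        ∃ x y : List Letter, (A.δ A.q0 x y).Nonempty ∧ x ++ y = [a] := by
      intro c hc
      induction hc using Relation.ReflTransGen.head_induction_on with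
      | refl => intro h; simp at h
      | head hstep _ ih =>
          intro hc2
          obtain ⟨x, y, hw, hmem⟩ := hstep
          rw [hc2] at hw
          rename_i c1 cmid _
          rw [hall c1.1] at hmem
          match x, hx : cmid.2, y, hw with
          | [], [], [Letter.a], _ => exact ⟨[], [a], ⟨cmid.1, hmem⟩, rfl⟩
          | [], [Letter.a], [], _ => exact ih hx
          | [Letter.a], [], [], _ => exact ⟨[a], [], ⟨cmid.1, hmem⟩, rfl⟩
    obtain ⟨x, y, ⟨p, hp⟩, hxy⟩ := key _ hchain rfl
    -- then `x ++ [a] ++ y` (a two-`a` word) is accepted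
    have hw2 : (x ++ [a] ++ y) ∈ A.Lang := by
      refine ⟨qf, hqfF, Relation.ReflTransGen.head (b := (p, [a])) ⟨x, y, rfl, hp⟩ ?_⟩
      rw [hall p]
      exact hchain
    have hne : (x ++ [a] ++ y) ≠ [] := by simp
    have hmem2 : (x ++ [a] ++ y) ∈ Lbabb := (hL _ hne).mp hw2
    have hcnt1 : (x ++ [a] ++ y).count a = (x.count a + y.count a) + 1 := by
      simp [List.count_append]; omega
    have hcnt2 : x.count a + y.count a = 1 := by
      have := congrArg (List.count a) hxy
      simpa [List.count_append] using this
    have := count_a_Lbabb hmem2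
    omega
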